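/- Let n ≥ 2 and let p₀, q₀ ∈ ℂ[x₁,…,xₙ] be polynomials with q₀ ≠ 0 and such that p₀ is not a constant multiple of q₀ (equivalently, the rational function p₀/q₀ is non-constant). Then there exist polynomials p, q ∈ ℂ[x₁,…,xₙ] with q ≠ 0 and p·q₀ = q·p₀ (so that p/q = p₀/q₀ as rational functions), and a point x ∈ ℂⁿ at which the differentials dq(x) and dp(x) are ℂ-linearly independent; equivalently, for the polynomial map g = (q, p) : ℂⁿ → ℂ², the set S := {x ∈ ℂⁿ : rank of the derivative dg(x) is < 2} is a proper subset of ℂⁿ. -/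

import Mathlib

open MvPolynomial Polynomial

/-- One-variable: if `P Q' = Q P'` and `Q ≠ 0`, then `P = c Q`. -/
lemma aux_one_var (P Q : Polynomial ℂ) (hQ : Q ≠ 0)
    (h : P * derivative Q = Q * derivative P) : ∃ c : ℂ, P = Polynomial.C c * Q := by
  classical
  letI : GCDMonoid (Polynomial ℂ) := EuclideanDomain.gcdMonoid _
  set d := GCDMonoid.gcd P Q with hd
  have hd0 : d ≠ 0 := gcd_ne_zero_of_right hQ
  set A := P / d with hA
  set B := Q / d with hB
  have hP : P = d * A := (EuclideanDomain.mul_div_cancel' hd0 (gcd_dvd_left P Q)).symm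
  have hQ' : Q = d * B := (EuclideanDomain.mul_div_cancel' hd0 (gcd_dvd_right P Q)).symm
  have hcop : IsCoprime A B := isCoprime_div_gcd_div_gcd hQ
  have hB0 : B ≠ 0 := right_div_gcd_ne_zero hQ
  have key : A * derivative B = B * derivative A := by
    have h2 : d * d * (A * derivative B) = d * d * (B * derivative A) := by
      rw [hP, hQ'] at h
      simp only [derivative_mul] at h
      linear_combination h
    exact mul_left_cancel₀ (mul_ne_zero hd0 hd0) h2
  have hw : wronskian A B = 0 := by
    rw [wronskian]; linear_combination key
  obtain ⟨hA', hB'⟩ := hcop.wronskian_eq_zero_iff.mp hw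
  obtain a := Polynomial.eq_C_of_derivative_eq_zero hA'
  obtain b := Polynomial.eq_C_of_derivative_eq_zero hB'
  have hb0 : B.coeff 0 ≠ 0 := fun hb => hB0 (by rw [b, hb, map_zero])
  refine ⟨A.coeff 0 / B.coeff 0, ?_⟩
  rw [hP, hQ', a, b, ← mul_assoc, mul_comm (Polynomial.C _) d, mul_assoc, ← map_mul]
  congr 1
  field_simp
  rw [Polynomial.coeff_C_zero, Polynomial.coeff_C_zero, mul_div_cancel_right₀ _ hb0]



/-- Chain rule for substituting one-variable polynomials into a multivariate polynomial. -/
lemma aux_deriv_aeval {n : ℕ} (f : Fin n → Polynomial ℂ) (r : MvPolynomial (Fin n) ℂ) :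
    derivative (MvPolynomial.aeval f r) =
      ∑ i, MvPolynomial.aeval f (pderiv i r) * derivative (f i) := by
  classical
  induction r using MvPolynomial.induction_on with
  | C a => simp
  | add p q hp hq =>
      simp only [map_add, derivative_add, hp, hq, add_mul, Finset.sum_add_distrib]
  | mul_X p j hp =>
      simp only [map_mul, MvPolynomial.aeval_X, derivative_mul, hp, pderiv_mul]
      rw [Finset.sum_mul]
      have : ∀ i : Fin n,
          MvPolynomial.aeval f (pderiv i p * X j + p * pderiv i (X j)) * derivative (f i)
          = MvPolynomial.aeval f (pderiv i p) * derivative (f i) * f j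
            + (if i = j then MvPolynomial.aeval f p * derivative (f j) else 0) := by
        intro i
        by_cases hij : i = j
        · subst hij
          rw [pderiv_X_self]
          simp [map_add, map_mul, MvPolynomial.aeval_X]
          ring
        · rw [pderiv_X_of_ne (Ne.symm hij)]
          simp [map_add, map_mul, MvPolynomial.aeval_X, hij]
          ring
      rw [Finset.sum_congr rfl fun i _ => this i, Finset.sum_add_distrib,
        Finset.sum_ite_eq' Finset.univ j]
      simp [add_comm]

lemma aux_eval_aeval {n : ℕ} (f : Fin n → Polynomial ℂ) (t : ℂ) (r : MvPolynomial (Fin n) ℂ) :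
    Polynomial.eval t (MvPolynomial.aeval f r)
      = MvPolynomial.eval (fun i => Polynomial.eval t (f i)) r := by
  induction r using MvPolynomial.induction_on with
  | C a => simp [Algebra.algebraMap_eq_smul_one]
  | add p q hp hq => simp [hp, hq]
  | mul_X p j hp => simp [hp]

lemma aux_exists_eval_ne {n : ℕ} (r : MvPolynomial (Fin n) ℂ) (h : r ≠ 0) :
    ∃ x : Fin n → ℂ, eval x r ≠ 0 := by
  by_contra h'
  push_neg at h'
  exact h (MvPolynomial.funext fun x => by simp [h' x])

/-- If `p ∂ᵢq = q ∂ᵢp` for all `i` then `p` is a constant multiple of `q`. -/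
lemma aux_ratio_const {n : ℕ} (p q : MvPolynomial (Fin n) ℂ) (hq : q ≠ 0)
    (h : ∀ i, p * pderiv i q = q * pderiv i p) : ∃ c : ℂ, p = MvPolynomial.C c * q := by
  obtain ⟨x₀, hx₀⟩ := aux_exists_eval_ne q hq
  refine ⟨eval x₀ p / eval x₀ q, MvPolynomial.funext fun y => ?_⟩
  set f : Fin n → Polynomial ℂ :=
    fun i => Polynomial.C (x₀ i) + Polynomial.C (y i - x₀ i) * Polynomial.X with hf
  have hf0 : (fun i => Polynomial.eval 0 (f i)) = x₀ := by funext i; simp [hf]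
  have hf1 : (fun i => Polynomial.eval 1 (f i)) = y := by funext i; simp [hf]
  set P := MvPolynomial.aeval f p with hP
  set Q := MvPolynomial.aeval f q with hQdef
  have hQ0 : Polynomial.eval 0 Q = eval x₀ q := by rw [hQdef, aux_eval_aeval, hf0]
  have hQ : Q ≠ 0 := by
    intro h0
    rw [h0, Polynomial.eval_zero] at hQ0
    exact hx₀ hQ0.symm
  have hPQ : P * derivative Q = Q * derivative P := by
    rw [hP, hQdef, aux_deriv_aeval, aux_deriv_aeval, Finset.mul_sum, Finset.mul_sum]
    refine Finset.sum_congr rfl fun i _ => ?_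
    rw [← mul_assoc, ← mul_assoc, ← map_mul, ← map_mul, h i]
  obtain ⟨c, hc⟩ := aux_one_var P Q hQ hPQ
  have e0 : eval x₀ p = c * eval x₀ q := by
    have := congrArg (Polynomial.eval 0) hc
    rwa [Polynomial.eval_mul, Polynomial.eval_C, hQ0, hP, aux_eval_aeval, hf0] at this
  have e1 : eval y p = c * eval y q := by
    have := congrArg (Polynomial.eval 1) hc
    rwa [Polynomial.eval_mul, Polynomial.eval_C, hP, hQdef, aux_eval_aeval,
      aux_eval_aeval, hf1] at this
  rw [MvPolynomial.eval_mul, MvPolynomial.eval_C, e1, e0]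
  field_simp

/-- Let `n ≥ 2` and let `p₀, q₀ ∈ ℂ[x₁,…,xₙ]` with `q₀ ≠ 0` and `p₀` not a constant
multiple of `q₀` (i.e. the rational function `p₀/q₀` is non-constant).  Then there exist
polynomials `p, q` with `q ≠ 0` and `p·q₀ = q·p₀` (so `p/q = p₀/q₀` as rational functions)
and a point `x ∈ ℂⁿ` at which the differentials `dq(x)` and `dp(x)` (identified with the
gradient vectors) are `ℂ`-linearly independent; equivalently, the map `g = (q, p) : ℂⁿ → ℂ²`
has derivative of rank `2` at `x`, so `S = {x | rank dg(x) < 2}` is a proper subset of `ℂⁿ`. -/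

theorem exists_representative_with_independent_differentials
    {n : ℕ} (hn : 2 ≤ n) (p₀ q₀ : MvPolynomial (Fin n) ℂ)
    (hq₀ : q₀ ≠ 0) (hnc : ¬ ∃ c : ℂ, p₀ = c • q₀) :
    ∃ p q : MvPolynomial (Fin n) ℂ, q ≠ 0 ∧ p * q₀ = q * p₀ ∧
      ∃ x : Fin n → ℂ,
        LinearIndependent ℂ
          ![fun i => eval x (pderiv i q), fun i => eval x (pderiv i p)] := by
  classical
  -- there is a coordinate where the "wronskian" of p₀, q₀ is nonzero
  have hA : ∃ i, p₀ * pderiv i q₀ - q₀ * pderiv i p₀ ≠ 0 := by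
    by_contra hcon
    push_neg at hcon
    obtain ⟨c, hc⟩ := aux_ratio_const p₀ q₀ hq₀ fun i => by
      have := hcon i; linear_combination this
    exact hnc ⟨c, by rw [hc, MvPolynomial.smul_eq_C_mul]⟩
  obtain ⟨i, hri⟩ := hA
  obtain ⟨x, hx⟩ := aux_exists_eval_ne _ hri
  -- choose another coordinate j ≠ i
  have h1n : 1 < n := hn
  set j : Fin n := if i = ⟨0, by omega⟩ then ⟨1, by omega⟩ else ⟨0, by omega⟩ with hj
  have hji : j ≠ i := by
    rcases eq_or_ne i ⟨0, by omega⟩ with h0 | h0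
    · rw [hj, if_pos h0, h0]; intro hh; exact absurd (Fin.val_eq_of_eq hh) (by simp)
    · rw [hj, if_neg h0]; intro hh; exact h0 hh.symm
  set Qi := eval x (pderiv i q₀) with hQi
  set PiV := eval x (pderiv i p₀) with hPi
  set Qj := eval x (pderiv j q₀) with hQj
  set Pj := eval x (pderiv j p₀) with hPj
  set Q0 := eval x q₀ with hQ0
  set P0 := eval x p₀ with hP0
  have hB : P0 * Qi - Q0 * PiV ≠ 0 := by
    simpa [hP0, hQi, hQ0, hPi] using hx
  set A := Qi * Pj - Qj * PiV with hAdef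
  set B := P0 * Qi - Q0 * PiV with hBdef
  set s : ℂ := if A = 0 then 1 else B / A with hs
  have hs0 : s ≠ 0 := by
    rw [hs]; split_ifs with h0
    · exact one_ne_zero
    · exact div_ne_zero hB h0
  have hsAB : s * A + B ≠ 0 := by
    rw [hs]; split_ifs with h0
    · simpa [h0] using hB
    · rw [div_mul_cancel₀ _ h0]
      intro hh
      exact hB (by linear_combination hh / 2)
  -- the representative
  set t : MvPolynomial (Fin n) ℂ := X j + MvPolynomial.C (s - x j) with ht
  have hevalt : eval x t = s := by simp [ht]
  have ht0 : t ≠ 0 := fun h0 => hs0 (by rw [← hevalt, h0, map_zero])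
  refine ⟨t * p₀, t * q₀, mul_ne_zero ht0 hq₀, by ring, x, ?_⟩
  -- gradient components
  have hpd : ∀ (k : Fin n) (r : MvPolynomial (Fin n) ℂ),
      eval x (pderiv k (t * r)) = (if k = j then eval x r else 0) + s * eval x (pderiv k r) := by
    intro k r
    rw [pderiv_mul, map_add, map_mul, map_mul]
    have : pderiv k t = if k = j then 1 else 0 := by
      rw [ht, map_add, pderiv_C, add_zero]
      split_ifs with hkj
      · rw [hkj, pderiv_X_self]
      · rw [pderiv_X_of_ne (Ne.symm hkj)]
    rw [this, hevalt]
    split_ifs with hkj <;> simp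
  rw [LinearIndependent.pair_iff]
  intro α β hab
  have hi := congrFun hab i
  have hj' := congrFun hab j
  simp only [Pi.add_apply, Pi.smul_apply, smul_eq_mul, Pi.zero_apply] at hi hj'
  rw [hpd i q₀, hpd i p₀, if_neg (Ne.symm hji), if_neg (Ne.symm hji)] at hi
  rw [hpd j q₀, hpd j p₀, if_pos rfl, if_pos rfl] at hj'
  rw [← hQi, ← hPi]  at hi
  rw [← hQj, ← hPj, ← hQ0, ← hP0] at hj'
  -- determinant
  have hD : s * (s * A + B) ≠ 0 := mul_ne_zero hs0 hsAB
  constructor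
  · have : α * (s * (s * A + B)) = 0 := by
      rw [hAdef, hBdef]
      linear_combination (P0 + s * Pj) * hi - (s * PiV) * hj'
    exact (mul_eq_zero.mp this).resolve_right hD
  · have : β * (s * (s * A + B)) = 0 := by
      rw [hAdef, hBdef]
      linear_combination (s * Qi) * hj' - (Q0 + s * Qj) * hi
    exact (mul_eq_zero.mp this).resolve_right hD
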